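/- Fix γ ∈ (0,2), an integer m ≥ 2 and b ∈ (0,1). There exists a constant C > 0, independent of r and f, such that for every r ∈ ℤ with r ≠ 0 and every probability density f with respect to ν_b, Σ_{x∈ℤ} ∫_{Ω_x} ( √(f(η^{x,x+r})) − √(f(η)) )² dν_b(η) ≤ C · |r|^γ · D(√f, ν_b), where Ω_x := {η ∈ Ω : η(x+j) = 1 for all j = 1, 2, …, m}. -/

import Mathlib

open MeasureTheory

/-- The long-range transition probability `p(z) = c_γ |z|^{-1-γ}` for `z ≠ 0`, `p(0)=0`. -/
noncomputable def transP (cγ γ : ℝ) (z : ℤ) : ℝ :=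
  if z = 0 then 0 else cγ * |(z : ℝ)| ^ (-(1 + γ))

/-- The exchange map `η ↦ η^{x,y}`, swapping the occupation values at sites `x` and `y`. -/
def exchange (x y : ℤ) (η : ℤ → Bool) : ℤ → Bool :=
  fun z => if z = x then η y else if z = y then η x else η z

/-- Occupation value of a site, as a real number. -/
noncomputable def bval (v : Bool) : ℝ := if v then 1 else 0

/-- The sites `a_{j,x,y}` (for `j ∈ {1, …, 4(m-1)}`). -/
def aIdx (m : ℕ) (x y : ℤ) (j : ℕ) : ℤ :=
  if j ≤ m - 1 then x - ((m : ℤ) - (j : ℤ))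
  else if j ≤ 2 * (m - 1) then y + (j : ℤ) - ((m : ℤ) - 1)
  else if j ≤ 3 * (m - 1) then y - (3 * (m : ℤ) - 2 - (j : ℤ))
  else x + (j : ℤ) - 3 * ((m : ℤ) - 1)

/-- `S^{(m)}_{x,y}(η) = c^{(m,dif)}_{x,y}(η) + c^{(m,dif)}_{y,x}(η)`. -/
noncomputable def Srate (m : ℕ) (x y : ℤ) (η : ℤ → Bool) : ℝ :=
  ∑ j ∈ Finset.Icc 1 m,
    (∏ i ∈ Finset.range (m - 1), bval (η (aIdx m x y (i + j))) +
      ∏ i ∈ Finset.range (m - 1), bval (η (aIdx m x y (i + j + 2 * (m - 1)))))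

/-- The jump rate `c^{(m)}_{x,y}(η) = S^{(m)}_{x,y}(η) + 1_{m ≥ 3} 1_{|x-y|=1}` (`m ≥ 2`). -/
noncomputable def crate (m : ℕ) (x y : ℤ) (η : ℤ → Bool) : ℝ :=
  Srate m x y η + (if 3 ≤ m ∧ |x - y| = 1 then 1 else 0)

/-- `I_{x,y}(√f, ν) = ∫ c^{(m)}_{x,y}(η) (√f(η^{x,y}) - √f(η))² dν`, in `[0,∞]`. -/
noncomputable def Ixy (m : ℕ) (ν : Measure (ℤ → Bool)) (f : (ℤ → Bool) → ℝ)
    (x y : ℤ) : ENNReal :=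
  ∫⁻ η, ENNReal.ofReal
    (crate m x y η * (Real.sqrt (f (exchange x y η)) - Real.sqrt (f η)) ^ 2) ∂ν

/-- The Dirichlet form `D(√f, ν) = (1/4) ∑_{x,y} p(y-x) I_{x,y}(√f, ν)`, in `[0,∞]`. -/
noncomputable def Dform (cγ γ : ℝ) (m : ℕ) (ν : Measure (ℤ → Bool))
    (f : (ℤ → Bool) → ℝ) : ENNReal :=
  (1 / 4 : ENNReal) * ∑' xy : ℤ × ℤ,
    ENNReal.ofReal (transP cγ γ (xy.2 - xy.1)) * Ixy m ν f xy.1 xy.2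

/-- `Ω_x = {η : η(x+j) = 1 for j = 1, …, m}`. -/
def OmegaX (m : ℕ) (x : ℤ) : Set (ℤ → Bool) :=
  {η : ℤ → Bool | ∀ j ∈ Finset.Icc 1 m, η (x + (j : ℤ)) = true}








/-- index swap function -/
def swfn (x y : ℤ) (i : ℤ) : ℤ := if i = x then y else if i = y then x else i

lemma exchange_eq_comp (x y : ℤ) (η : ℤ → Bool) : exchange x y η = η ∘ swfn x y := by
  funext z
  simp only [exchange, swfn, Function.comp]
  split_ifs <;> rfl

lemma swfn_invol (x y : ℤ) (i : ℤ) : swfn x y (swfn x y i) = i := by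
  simp only [swfn]
  split_ifs <;> omega

lemma swfn_inj (x y : ℤ) : Function.Injective (swfn x y) := by
  intro a b h
  have := congrArg (swfn x y) h
  rwa [swfn_invol, swfn_invol] at this

lemma measurable_exchange (x y : ℤ) : Measurable (exchange x y) := by
  apply measurable_pi_lambda
  intro z
  simp only [exchange]
  split_ifs <;> exact measurable_pi_apply _

/-- cylinder sets -/
def Cyl : Set (Set (ℤ → Bool)) :=
  {A | ∃ (s : Finset ℤ) (g : ℤ → Bool), A = {η : ℤ → Bool | ∀ i ∈ s, η i = g i}}

lemma isPiSystem_Cyl : IsPiSystem Cyl := by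
  rintro A ⟨s, g, rfl⟩ B ⟨s', g', rfl⟩ hne
  obtain ⟨η₀, hη₀A, hη₀B⟩ := hne
  refine ⟨s ∪ s', η₀, ?_⟩
  ext η
  simp only [Set.mem_inter_iff, Set.mem_setOf_eq, Finset.mem_union]
  constructor
  · rintro ⟨h1, h2⟩ i hi
    rcases hi with hi | hi
    · rw [h1 i hi, hη₀A i hi]
    · rw [h2 i hi, hη₀B i hi]
  · intro h
    constructor
    · intro i hi; rw [h i (Or.inl hi), hη₀A i hi]
    · intro i hi; rw [h i (Or.inr hi), hη₀B i hi]

lemma measurableSet_cyl (s : Finset ℤ) (g : ℤ → Bool) :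
    MeasurableSet {η : ℤ → Bool | ∀ i ∈ s, η i = g i} := by
  have : {η : ℤ → Bool | ∀ i ∈ s, η i = g i} = ⋂ i ∈ s, {η : ℤ → Bool | η i = g i} := by
    ext η; simp
  rw [this]
  refine MeasurableSet.biInter s.countable_toSet (fun i _ => ?_)
  have : {η : ℤ → Bool | η i = g i} = (fun η : ℤ → Bool => η i) ⁻¹' {g i} := by
    ext η; simp
  rw [this]
  exact (measurable_pi_apply i) (MeasurableSet.singleton (g i))

lemma generateFrom_Cyl : (inferInstance : MeasurableSpace (ℤ → Bool)) =
    MeasurableSpace.generateFrom Cyl := by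
  apply le_antisymm
  · -- pi σ-algebra ≤ generated
    rw [show (inferInstance : MeasurableSpace (ℤ → Bool)) = MeasurableSpace.pi from rfl]
    refine iSup_le fun a => ?_
    rw [MeasurableSpace.comap_le_iff_le_map]
    intro B _
    -- B : Set Bool, show (eval a) ⁻¹' B is measurable in generateFrom Cyl
    show MeasurableSet[MeasurableSpace.generateFrom Cyl] ((fun η : ℤ → Bool => η a) ⁻¹' B)
    have hcase : ∀ c : Bool, MeasurableSet[MeasurableSpace.generateFrom Cyl]
        {η : ℤ → Bool | η a = c} := by
      intro c
      apply MeasurableSpace.measurableSet_generateFrom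
      refine ⟨{a}, fun _ => c, ?_⟩
      ext η; simp
    by_cases ht : true ∈ B <;> by_cases hf : false ∈ B
    · have : (fun η : ℤ → Bool => η a) ⁻¹' B = Set.univ := by
        ext η; simp only [Set.mem_preimage, Set.mem_univ, iff_true]
        cases η a <;> assumption
      rw [this]; exact @MeasurableSet.univ _ (MeasurableSpace.generateFrom Cyl)
    · have : (fun η : ℤ → Bool => η a) ⁻¹' B = {η : ℤ → Bool | η a = true} := by
        ext η; simp only [Set.mem_preimage, Set.mem_setOf_eq]
        cases h : η a <;> simp_all
      rw [this]; exact hcase true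
    · have : (fun η : ℤ → Bool => η a) ⁻¹' B = {η : ℤ → Bool | η a = false} := by
        ext η; simp only [Set.mem_preimage, Set.mem_setOf_eq]
        cases h : η a <;> simp_all
      rw [this]; exact hcase false
    · have : (fun η : ℤ → Bool => η a) ⁻¹' B = ∅ := by
        ext η; simp only [Set.mem_preimage, Set.mem_empty_iff_false, iff_false]
        cases h : η a <;> simp_all
      rw [this]; exact @MeasurableSet.empty _ (MeasurableSpace.generateFrom Cyl)
  · rw [MeasurableSpace.generateFrom_le_iff]
    rintro A ⟨s, g, rfl⟩
    exact measurableSet_cyl s g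

theorem map_exchange (ν : Measure (ℤ → Bool)) (hprob : IsProbabilityMeasure ν) (b : ℝ)
    (hcyl : ∀ (s : Finset ℤ) (g : ℤ → Bool),
      ν {η : ℤ → Bool | ∀ i ∈ s, η i = g i} =
        ∏ i ∈ s, ENNReal.ofReal (if g i then b else 1 - b))
    (x y : ℤ) : ν.map (exchange x y) = ν := by
  have hmeas := measurable_exchange x y
  have : IsProbabilityMeasure (ν.map (exchange x y)) := Measure.isProbabilityMeasure_map hmeas.aemeasurable
  apply ext_of_generate_finite Cyl generateFrom_Cyl isPiSystem_Cyl
  · rintro A ⟨s, g, rfl⟩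
    rw [Measure.map_apply hmeas (measurableSet_cyl s g)]
    have hpre : exchange x y ⁻¹' {η : ℤ → Bool | ∀ i ∈ s, η i = g i} =
        {η : ℤ → Bool | ∀ i ∈ s.image (swfn x y), η i = g (swfn x y i)} := by
      ext η
      simp only [Set.mem_preimage, Set.mem_setOf_eq, Finset.mem_image]
      constructor
      · rintro h i ⟨j, hj, rfl⟩
        have := h j hj
        rw [exchange_eq_comp] at this
        simpa [swfn_invol] using this
      · intro h i hi
        rw [exchange_eq_comp]
        have := h (swfn x y i) ⟨i, hi, rfl⟩
        simpa [swfn_invol] using this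
    rw [hpre, hcyl, hcyl]
    rw [Finset.prod_image (fun a _ c _ h => swfn_inj x y h)]
    apply Finset.prod_congr rfl
    intro i _
    rw [swfn_invol]
  · simp [measure_univ]


lemma bval_nonneg (v : Bool) : 0 ≤ bval v := by
  unfold bval; split <;> norm_num

lemma bval_true : bval true = 1 := by simp [bval]

lemma Srate_nonneg (m : ℕ) (x y : ℤ) (η : ℤ → Bool) : 0 ≤ Srate m x y η := by
  apply Finset.sum_nonneg
  intro j _
  exact add_nonneg (Finset.prod_nonneg fun i _ => bval_nonneg _)
    (Finset.prod_nonneg fun i _ => bval_nonneg _)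

lemma crate_nonneg (m : ℕ) (x y : ℤ) (η : ℤ → Bool) : 0 ≤ crate m x y η := by
  unfold crate
  have := Srate_nonneg m x y η
  split <;> linarith

lemma Srate_ge_one (m : ℕ) (x y : ℤ) (η : ℤ → Bool) (j₀ : ℕ) (hj : j₀ ∈ Finset.Icc 1 m)
    (h : (∀ i ∈ Finset.range (m - 1), η (aIdx m x y (i + j₀)) = true) ∨
         (∀ i ∈ Finset.range (m - 1), η (aIdx m x y (i + j₀ + 2 * (m - 1))) = true)) :
    1 ≤ Srate m x y η := by
  have h0 : ∀ j ∈ Finset.Icc 1 m,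
      0 ≤ (∏ i ∈ Finset.range (m - 1), bval (η (aIdx m x y (i + j))) +
        ∏ i ∈ Finset.range (m - 1), bval (η (aIdx m x y (i + j + 2 * (m - 1))))) :=
    fun j _ => add_nonneg (Finset.prod_nonneg fun i _ => bval_nonneg _)
      (Finset.prod_nonneg fun i _ => bval_nonneg _)
  have hle := Finset.single_le_sum h0 hj
  have hP1 : 0 ≤ ∏ i ∈ Finset.range (m - 1), bval (η (aIdx m x y (i + j₀))) :=
    Finset.prod_nonneg fun i _ => bval_nonneg _
  have hP2 : 0 ≤ ∏ i ∈ Finset.range (m - 1), bval (η (aIdx m x y (i + j₀ + 2 * (m - 1)))) :=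
    Finset.prod_nonneg fun i _ => bval_nonneg _
  rcases h with h | h
  · have : (∏ i ∈ Finset.range (m - 1), bval (η (aIdx m x y (i + j₀)))) = 1 :=
      Finset.prod_eq_one fun i hi => by rw [h i hi]; exact bval_true
    unfold Srate; linarith [hle]
  · have : (∏ i ∈ Finset.range (m - 1), bval (η (aIdx m x y (i + j₀ + 2 * (m - 1))))) = 1 :=
      Finset.prod_eq_one fun i hi => by rw [h i hi]; exact bval_true
    unfold Srate; linarith [hle]

lemma crate_ge_one (m : ℕ) (x y : ℤ) (η : ℤ → Bool) (j₀ : ℕ) (hj : j₀ ∈ Finset.Icc 1 m)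
    (h : (∀ i ∈ Finset.range (m - 1), η (aIdx m x y (i + j₀)) = true) ∨
         (∀ i ∈ Finset.range (m - 1), η (aIdx m x y (i + j₀ + 2 * (m - 1))) = true)) :
    1 ≤ crate m x y η := by
  have := Srate_ge_one m x y η j₀ hj h
  unfold crate
  split <;> linarith

lemma mem_OmegaX (m : ℕ) (x : ℤ) (η : ℤ → Bool) (hη : η ∈ OmegaX m x) (w : ℤ)
    (h1 : 1 ≤ w) (h2 : w ≤ m) : η (x + w) = true := by
  have hmem : w.toNat ∈ Finset.Icc 1 m := by
    simp only [Finset.mem_Icc]; omega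
  have := hη w.toNat hmem
  rwa [show ((w.toNat : ℤ)) = w by omega] at this

/-- base window: on `Ω_x`, the rate of any exchange `(x,y)` is at least 1. -/
lemma crate_base (m : ℕ) (hm : 2 ≤ m) (x y : ℤ) (η : ℤ → Bool) (hη : η ∈ OmegaX m x) :
    1 ≤ crate m x y η := by
  apply crate_ge_one m x y η m (by simp [Finset.mem_Icc]; omega)
  right
  intro i hi
  have hi' : i < m - 1 := Finset.mem_range.mp hi
  have ha : aIdx m x y (i + m + 2 * (m - 1)) = x + (i + 1 : ℤ) := by
    rw [aIdx, if_neg (by omega), if_neg (by omega), if_neg (by omega)]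
    push_cast; omega
  rw [ha]
  exact mem_OmegaX m x η hη _ (by omega) (by push_cast; omega)

section Wmach

def lo (m t : ℕ) : ℤ := if t ≤ m then (m : ℤ) - t else if t ≤ m + 3 then 0 else (t : ℤ) - m - 3

def uu (x s r : ℤ) (m t : ℕ) : ℤ :=
  if t < m then x + ((m : ℤ) - t)
  else if t = m then x
  else if t = m + 1 then x + s
  else if t = m + 2 then x
  else x + ((t : ℤ) - m - 2)

def vv (x s r : ℤ) (m t : ℕ) : ℤ :=
  if t < m then x + s + ((m : ℤ) - t)
  else if t = m then x + s
  else if t = m + 1 then x + r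
  else if t = m + 2 then x + s
  else x + s + ((t : ℤ) - m - 2)

def WW (x s r : ℤ) (m : ℕ) (t : ℕ) (η : ℤ → Bool) (z : ℤ) : Bool :=
  if z = x then (if t ≤ m then η x else if t ≤ m + 2 then η (x + s) else η (x + r))
  else if z = x + s then
    (if t ≤ m then η (x + s) else if t = m + 1 then η x
      else if t = m + 2 then η (x + r) else η (x + s))
  else if z = x + r then (if t ≤ m + 1 then η (x + r) else η x)
  else if x < z ∧ z ≤ x + (m : ℤ) ∧ lo m t < z - x then η (z + s)
  else if x + s < z ∧ z ≤ x + s + (m : ℤ) ∧ lo m t < z - x - s then η (z - s)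
  else η z

variable {x s r : ℤ} {m : ℕ} {η : ℤ → Bool}

def SgnHyp (x s r : ℤ) (m : ℕ) : Prop :=
  ((m : ℤ) + 1 ≤ s ∧ s + (m : ℤ) + 1 ≤ r) ∨ (s ≤ -((m : ℤ) + 1) ∧ r ≤ s - ((m : ℤ) + 1))

lemma WW_eval_plain {t : ℕ} {z : ℤ} (h1 : z ≠ x) (h2 : z ≠ x + s) (h3 : z ≠ x + r)
    (h4 : ¬(x < z ∧ z ≤ x + (m : ℤ) ∧ lo m t < z - x))
    (h5 : ¬(x + s < z ∧ z ≤ x + s + (m : ℤ) ∧ lo m t < z - x - s)) :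
    WW x s r m t η z = η z := by
  rw [WW, if_neg h1, if_neg h2, if_neg h3, if_neg h4, if_neg h5]

lemma WW_eval_r1 {t : ℕ} {z : ℤ} (h1 : z ≠ x) (h2 : z ≠ x + s) (h3 : z ≠ x + r)
    (h4 : x < z ∧ z ≤ x + (m : ℤ) ∧ lo m t < z - x) :
    WW x s r m t η z = η (z + s) := by
  rw [WW, if_neg h1, if_neg h2, if_neg h3, if_pos h4]

lemma WW_eval_r2 {t : ℕ} {z : ℤ} (h1 : z ≠ x) (h2 : z ≠ x + s) (h3 : z ≠ x + r)
    (h4 : ¬(x < z ∧ z ≤ x + (m : ℤ) ∧ lo m t < z - x))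
    (h5 : x + s < z ∧ z ≤ x + s + (m : ℤ) ∧ lo m t < z - x - s) :
    WW x s r m t η z = η (z - s) := by
  rw [WW, if_neg h1, if_neg h2, if_neg h3, if_neg h4, if_pos h5]

lemma WW_eval_x {t : ℕ} :
    WW x s r m t η x = if t ≤ m then η x else if t ≤ m + 2 then η (x + s) else η (x + r) := by
  rw [WW, if_pos rfl]

lemma WW_eval_xs {t : ℕ} (h1 : x + s ≠ x) :
    WW x s r m t η (x + s) = if t ≤ m then η (x + s) else if t = m + 1 then η x
      else if t = m + 2 then η (x + r) else η (x + s) := by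
  rw [WW, if_neg h1, if_pos rfl]

lemma WW_eval_xr {t : ℕ} (h1 : x + r ≠ x) (h2 : x + r ≠ x + s) :
    WW x s r m t η (x + r) = if t ≤ m + 1 then η (x + r) else η x := by
  rw [WW, if_neg h1, if_neg h2, if_pos rfl]

lemma WW_zero (hm : 2 ≤ m) (H : SgnHyp x s r m) : WW x s r m 0 η = η := by
  have H' : ((m : ℤ) + 1 ≤ s ∧ s + (m : ℤ) + 1 ≤ r) ∨
      (s ≤ -((m : ℤ) + 1) ∧ r ≤ s - ((m : ℤ) + 1)) := H
  funext z
  have hl : lo m 0 = (m : ℤ) := by rw [lo, if_pos (by omega)]; push_cast; ring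
  rw [WW, hl]
  split_ifs <;> first | rfl | (congr 1; omega) | (exfalso; omega)

lemma WW_final (hm : 2 ≤ m) (H : SgnHyp x s r m) :
    WW x s r m (2 * m + 3) η = exchange x (x + r) η := by
  have H' : ((m : ℤ) + 1 ≤ s ∧ s + (m : ℤ) + 1 ≤ r) ∨
      (s ≤ -((m : ℤ) + 1) ∧ r ≤ s - ((m : ℤ) + 1)) := H
  funext z
  have hl : lo m (2 * m + 3) = (m : ℤ) := by
    rw [lo, if_neg (by omega), if_neg (by omega)]; push_cast; ring
  rw [WW, exchange, hl]
  split_ifs <;> first | rfl | (congr 1; omega) | (exfalso; omega)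

lemma WW_step_shift (hm : 2 ≤ m) (H : SgnHyp x s r m) {t : ℕ} (ht : t < m) :
    exchange (uu x s r m t) (vv x s r m t) (WW x s r m t η) = WW x s r m (t + 1) η := by
  have H' : ((m : ℤ) + 1 ≤ s ∧ s + (m : ℤ) + 1 ≤ r) ∨
      (s ≤ -((m : ℤ) + 1) ∧ r ≤ s - ((m : ℤ) + 1)) := H
  have hu : uu x s r m t = x + ((m : ℤ) - t) := by rw [uu, if_pos ht]
  have hv : vv x s r m t = x + s + ((m : ℤ) - t) := by rw [vv, if_pos ht]
  have hl1 : lo m t = (m : ℤ) - t := by rw [lo, if_pos (by omega)]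
  have hl2 : lo m (t + 1) = (m : ℤ) - t - 1 := by
    rw [lo, if_pos (by omega)]; push_cast; ring
  funext z
  rw [hu, hv]
  simp only [exchange]
  by_cases hzu : z = x + ((m : ℤ) - t)
  · rw [if_pos hzu]
    subst hzu
    rw [WW_eval_plain (by omega) (by omega) (by omega)
        (by rw [hl1]; omega) (by rw [hl1]; omega),
      WW_eval_r1 (by omega) (by omega) (by omega) ⟨by omega, by omega, by rw [hl2]; omega⟩]
    congr 1; ring
  · rw [if_neg hzu]
    by_cases hzv : z = x + s + ((m : ℤ) - t)
    · rw [if_pos hzv]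
      subst hzv
      rw [WW_eval_plain (by omega) (by omega) (by omega)
          (by rw [hl1]; omega) (by rw [hl1]; omega),
        WW_eval_r2 (by omega) (by omega) (by omega) (by rw [hl2]; omega)
          ⟨by omega, by omega, by rw [hl2]; omega⟩]
      congr 1; ring
    · rw [if_neg hzv, WW, WW, hl1, hl2]
      split_ifs <;> first | rfl | (congr 1; omega) | (exfalso; omega)

lemma WW_step_hop1 (hm : 2 ≤ m) (H : SgnHyp x s r m) :
    exchange (uu x s r m m) (vv x s r m m) (WW x s r m m η) = WW x s r m (m + 1) η := by
  have H' : ((m : ℤ) + 1 ≤ s ∧ s + (m : ℤ) + 1 ≤ r) ∨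
      (s ≤ -((m : ℤ) + 1) ∧ r ≤ s - ((m : ℤ) + 1)) := H
  have hu : uu x s r m m = x := by rw [uu, if_neg (by omega), if_pos rfl]
  have hv : vv x s r m m = x + s := by rw [vv, if_neg (by omega), if_pos rfl]
  have hl1 : lo m m = 0 := by rw [lo, if_pos (le_refl m)]; omega
  have hl2 : lo m (m + 1) = 0 := by rw [lo, if_neg (by omega), if_pos (by omega)]
  funext z
  rw [hu, hv]
  simp only [exchange]
  by_cases hzu : z = x
  · rw [if_pos hzu]
    subst hzu
    rw [WW_eval_xs (by omega), if_pos (le_refl m), WW_eval_x,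
      if_neg (by omega), if_pos (by omega)]
  · rw [if_neg hzu]
    by_cases hzv : z = x + s
    · rw [if_pos hzv]
      subst hzv
      rw [WW_eval_x, if_pos (le_refl m), WW_eval_xs (by omega),
        if_neg (by omega), if_pos rfl]
    · rw [if_neg hzv, WW, WW, hl1, hl2]
      split_ifs <;> first | rfl | (congr 1; omega) | (exfalso; omega)

lemma WW_step_hop2 (hm : 2 ≤ m) (H : SgnHyp x s r m) :
    exchange (uu x s r m (m + 1)) (vv x s r m (m + 1)) (WW x s r m (m + 1) η) =
      WW x s r m (m + 2) η := by
  have H' : ((m : ℤ) + 1 ≤ s ∧ s + (m : ℤ) + 1 ≤ r) ∨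
      (s ≤ -((m : ℤ) + 1) ∧ r ≤ s - ((m : ℤ) + 1)) := H
  have hu : uu x s r m (m + 1) = x + s := by
    rw [uu, if_neg (by omega), if_neg (by omega), if_pos rfl]
  have hv : vv x s r m (m + 1) = x + r := by
    rw [vv, if_neg (by omega), if_neg (by omega), if_pos rfl]
  have hl1 : lo m (m + 1) = 0 := by rw [lo, if_neg (by omega), if_pos (by omega)]
  have hl2 : lo m (m + 2) = 0 := by rw [lo, if_neg (by omega), if_pos (by omega)]
  funext z
  rw [hu, hv]
  simp only [exchange]
  by_cases hzu : z = x + s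
  · rw [if_pos hzu]
    subst hzu
    rw [WW_eval_xr (by omega) (by omega), if_pos (by omega), WW_eval_xs (by omega),
      if_neg (by omega), if_neg (by omega), if_pos rfl]
  · rw [if_neg hzu]
    by_cases hzv : z = x + r
    · rw [if_pos hzv]
      subst hzv
      rw [WW_eval_xs (by omega), if_neg (by omega), if_pos rfl,
        WW_eval_xr (by omega) (by omega), if_neg (by omega)]
    · rw [if_neg hzv, WW, WW, hl1, hl2]
      split_ifs <;> first | rfl | (congr 1; omega) | (exfalso; omega)

lemma WW_step_hop3 (hm : 2 ≤ m) (H : SgnHyp x s r m) :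
    exchange (uu x s r m (m + 2)) (vv x s r m (m + 2)) (WW x s r m (m + 2) η) =
      WW x s r m (m + 3) η := by
  have H' : ((m : ℤ) + 1 ≤ s ∧ s + (m : ℤ) + 1 ≤ r) ∨
      (s ≤ -((m : ℤ) + 1) ∧ r ≤ s - ((m : ℤ) + 1)) := H
  have hu : uu x s r m (m + 2) = x := by
    rw [uu, if_neg (by omega), if_neg (by omega), if_neg (by omega), if_pos rfl]
  have hv : vv x s r m (m + 2) = x + s := by
    rw [vv, if_neg (by omega), if_neg (by omega), if_neg (by omega), if_pos rfl]
  have hl1 : lo m (m + 2) = 0 := by rw [lo, if_neg (by omega), if_pos (by omega)]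
  have hl2 : lo m (m + 3) = 0 := by rw [lo, if_neg (by omega), if_pos (by omega)]
  funext z
  rw [hu, hv]
  simp only [exchange]
  by_cases hzu : z = x
  · rw [if_pos hzu]
    subst hzu
    rw [WW_eval_xs (by omega), if_neg (by omega), if_neg (by omega), if_pos rfl,
      WW_eval_x, if_neg (by omega), if_neg (by omega)]
  · rw [if_neg hzu]
    by_cases hzv : z = x + s
    · rw [if_pos hzv]
      subst hzv
      rw [WW_eval_x, if_neg (by omega), if_pos (by omega),
        WW_eval_xs (by omega), if_neg (by omega), if_neg (by omega), if_neg (by omega)]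
    · rw [if_neg hzv, WW, WW, hl1, hl2]
      split_ifs <;> first | rfl | (congr 1; omega) | (exfalso; omega)

lemma WW_step_back (hm : 2 ≤ m) (H : SgnHyp x s r m) {t : ℕ} (h1 : m + 3 ≤ t)
    (h2 : t < 2 * m + 3) :
    exchange (uu x s r m t) (vv x s r m t) (WW x s r m t η) = WW x s r m (t + 1) η := by
  have H' : ((m : ℤ) + 1 ≤ s ∧ s + (m : ℤ) + 1 ≤ r) ∨
      (s ≤ -((m : ℤ) + 1) ∧ r ≤ s - ((m : ℤ) + 1)) := H
  have hu : uu x s r m t = x + ((t : ℤ) - m - 2) := by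
    rw [uu, if_neg (by omega), if_neg (by omega), if_neg (by omega), if_neg (by omega)]
  have hv : vv x s r m t = x + s + ((t : ℤ) - m - 2) := by
    rw [vv, if_neg (by omega), if_neg (by omega), if_neg (by omega), if_neg (by omega)]
  have hl1 : lo m t = (t : ℤ) - m - 3 := by
    rw [lo, if_neg (by omega)]
    split_ifs with h
    · omega
    · rfl
  have hl2 : lo m (t + 1) = (t : ℤ) - m - 2 := by
    rw [lo, if_neg (by omega), if_neg (by omega)]; push_cast; ring
  funext z
  rw [hu, hv]
  simp only [exchange]
  by_cases hzu : z = x + ((t : ℤ) - m - 2)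
  · rw [if_pos hzu]
    subst hzu
    rw [WW_eval_r2 (by omega) (by omega) (by omega) (by rw [hl1]; omega)
        ⟨by omega, by omega, by rw [hl1]; omega⟩,
      WW_eval_plain (by omega) (by omega) (by omega) (by rw [hl2]; omega) (by rw [hl2]; omega)]
    congr 1; ring
  · rw [if_neg hzu]
    by_cases hzv : z = x + s + ((t : ℤ) - m - 2)
    · rw [if_pos hzv]
      subst hzv
      rw [WW_eval_r1 (by omega) (by omega) (by omega)
          ⟨by omega, by omega, by rw [hl1]; omega⟩,
        WW_eval_plain (by omega) (by omega) (by omega) (by rw [hl2]; omega)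
          (by rw [hl2]; omega)]
      congr 1; ring
    · rw [if_neg hzv, WW, WW, hl1, hl2]
      split_ifs <;> first | rfl | (congr 1; omega) | (exfalso; omega)

lemma WW_step (hm : 2 ≤ m) (H : SgnHyp x s r m) {t : ℕ} (ht : t < 2 * m + 3) :
    exchange (uu x s r m t) (vv x s r m t) (WW x s r m t η) = WW x s r m (t + 1) η := by
  rcases lt_or_ge t m with h | h
  · exact WW_step_shift hm H h
  rcases Nat.lt_or_ge t (m + 3) with h' | h'
  · rcases (show t = m ∨ t = m + 1 ∨ t = m + 2 by omega) with rfl | rfl | rfl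
    · exact WW_step_hop1 hm H
    · exact WW_step_hop2 hm H
    · exact WW_step_hop3 hm H
  · exact WW_step_back hm H h' ht

end Wmach



section Wind

variable {x s r : ℤ} {m : ℕ} {η : ℤ → Bool}

lemma window (hm : 2 ≤ m) (H : SgnHyp x s r m) (hη : η ∈ OmegaX m x) {t : ℕ}
    (ht : t < 2 * m + 3) :
    1 ≤ crate m (uu x s r m t) (vv x s r m t) (WW x s r m t η) := by
  have H' : ((m : ℤ) + 1 ≤ s ∧ s + (m : ℤ) + 1 ≤ r) ∨
      (s ≤ -((m : ℤ) + 1) ∧ r ≤ s - ((m : ℤ) + 1)) := H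
  rcases lt_or_ge t m with hph | hph
  · -- forward shift phase
    have hu : uu x s r m t = x + ((m : ℤ) - t) := by rw [uu, if_pos hph]
    have hv : vv x s r m t = x + s + ((m : ℤ) - t) := by rw [vv, if_pos hph]
    have hl1 : lo m t = (m : ℤ) - t := by rw [lo, if_pos (by omega)]
    rw [hu, hv]
    apply crate_ge_one m _ _ _ (t + 1) (by simp only [Finset.mem_Icc]; omega)
    left
    intro i hi
    have hi' : i < m - 1 := Finset.mem_range.mp hi
    by_cases hk : i + (t + 1) ≤ m - 1
    · have ha : aIdx m (x + ((m : ℤ) - t)) (x + s + ((m : ℤ) - t)) (i + (t + 1)) =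
          x + ((i : ℤ) + 1) := by
        simp only [aIdx]; rw [if_pos hk]; push_cast; omega
      rw [ha, WW_eval_plain (by omega) (by omega) (by omega)
          (by rw [hl1]; omega) (by rw [hl1]; omega)]
      exact mem_OmegaX m x η hη _ (by omega) (by omega)
    · have ha : aIdx m (x + ((m : ℤ) - t)) (x + s + ((m : ℤ) - t)) (i + (t + 1)) =
          x + s + ((i : ℤ) + 2) := by
        simp only [aIdx]; rw [if_neg hk, if_pos (by omega)]; push_cast; omega
      rw [ha, WW_eval_r2 (by omega) (by omega) (by omega)
          (by rw [hl1]; omega) ⟨by omega, by omega, by rw [hl1]; omega⟩,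
        show x + s + ((i : ℤ) + 2) - s = x + ((i : ℤ) + 2) by ring]
      exact mem_OmegaX m x η hη _ (by omega) (by omega)
  rcases Nat.lt_or_ge t (m + 3) with hph' | hph'
  · -- the three hops
    rcases (show t = m ∨ t = m + 1 ∨ t = m + 2 by omega) with h | h | h <;> rw [h]
    · have hu : uu x s r m m = x := by rw [uu, if_neg (by omega), if_pos rfl]
      have hv : vv x s r m m = x + s := by rw [vv, if_neg (by omega), if_pos rfl]
      have hl1 : lo m m = 0 := by rw [lo, if_pos (le_refl m)]; omega
      rw [hu, hv]
      apply crate_ge_one m _ _ _ m (by simp only [Finset.mem_Icc]; omega)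
      left
      intro i hi
      have hi' : i < m - 1 := Finset.mem_range.mp hi
      have ha : aIdx m x (x + s) (i + m) = x + s + ((i : ℤ) + 1) := by
        simp only [aIdx]; rw [if_neg (by omega), if_pos (by omega)]; push_cast; omega
      rw [ha, WW_eval_r2 (by omega) (by omega) (by omega)
          (by rw [hl1]; omega) ⟨by omega, by omega, by rw [hl1]; omega⟩,
        show x + s + ((i : ℤ) + 1) - s = x + ((i : ℤ) + 1) by ring]
      exact mem_OmegaX m x η hη _ (by omega) (by omega)
    · have hu : uu x s r m (m + 1) = x + s := by
        rw [uu, if_neg (by omega), if_neg (by omega), if_pos rfl]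
      have hv : vv x s r m (m + 1) = x + r := by
        rw [vv, if_neg (by omega), if_neg (by omega), if_pos rfl]
      have hl1 : lo m (m + 1) = 0 := by rw [lo, if_neg (by omega), if_pos (by omega)]
      rw [hu, hv]
      apply crate_ge_one m _ _ _ m (by simp only [Finset.mem_Icc]; omega)
      right
      intro i hi
      have hi' : i < m - 1 := Finset.mem_range.mp hi
      have ha : aIdx m (x + s) (x + r) (i + m + 2 * (m - 1)) = x + s + ((i : ℤ) + 1) := by
        simp only [aIdx]
        rw [if_neg (by omega), if_neg (by omega), if_neg (by omega)]; push_cast; omega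
      rw [ha, WW_eval_r2 (by omega) (by omega) (by omega)
          (by rw [hl1]; omega) ⟨by omega, by omega, by rw [hl1]; omega⟩,
        show x + s + ((i : ℤ) + 1) - s = x + ((i : ℤ) + 1) by ring]
      exact mem_OmegaX m x η hη _ (by omega) (by omega)
    · have hu : uu x s r m (m + 2) = x := by
        rw [uu, if_neg (by omega), if_neg (by omega), if_neg (by omega), if_pos rfl]
      have hv : vv x s r m (m + 2) = x + s := by
        rw [vv, if_neg (by omega), if_neg (by omega), if_neg (by omega), if_pos rfl]
      have hl1 : lo m (m + 2) = 0 := by rw [lo, if_neg (by omega), if_pos (by omega)]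
      rw [hu, hv]
      apply crate_ge_one m _ _ _ m (by simp only [Finset.mem_Icc]; omega)
      left
      intro i hi
      have hi' : i < m - 1 := Finset.mem_range.mp hi
      have ha : aIdx m x (x + s) (i + m) = x + s + ((i : ℤ) + 1) := by
        simp only [aIdx]; rw [if_neg (by omega), if_pos (by omega)]; push_cast; omega
      rw [ha, WW_eval_r2 (by omega) (by omega) (by omega)
          (by rw [hl1]; omega) ⟨by omega, by omega, by rw [hl1]; omega⟩,
        show x + s + ((i : ℤ) + 1) - s = x + ((i : ℤ) + 1) by ring]
      exact mem_OmegaX m x η hη _ (by omega) (by omega)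
  · -- backward shift phase
    have hu : uu x s r m t = x + ((t : ℤ) - m - 2) := by
      rw [uu, if_neg (by omega), if_neg (by omega), if_neg (by omega), if_neg (by omega)]
    have hv : vv x s r m t = x + s + ((t : ℤ) - m - 2) := by
      rw [vv, if_neg (by omega), if_neg (by omega), if_neg (by omega), if_neg (by omega)]
    have hl1 : lo m t = (t : ℤ) - m - 3 := by
      rw [lo, if_neg (by omega)]
      split_ifs with h
      · omega
      · rfl
    rw [hu, hv]
    apply crate_ge_one m _ _ _ (2 * m + 3 - t) (by simp only [Finset.mem_Icc]; omega)
    left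
    intro i hi
    have hi' : i < m - 1 := Finset.mem_range.mp hi
    by_cases hk : i + (2 * m + 3 - t) ≤ m - 1
    · have ha : aIdx m (x + ((t : ℤ) - m - 2)) (x + s + ((t : ℤ) - m - 2))
          (i + (2 * m + 3 - t)) = x + ((i : ℤ) + 1) := by
        simp only [aIdx]; rw [if_pos hk]; push_cast; omega
      rw [ha, WW_eval_plain (by omega) (by omega) (by omega)
          (by rw [hl1]; omega) (by rw [hl1]; omega)]
      exact mem_OmegaX m x η hη _ (by omega) (by omega)
    · have ha : aIdx m (x + ((t : ℤ) - m - 2)) (x + s + ((t : ℤ) - m - 2))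
          (i + (2 * m + 3 - t)) = x + s + ((i : ℤ) + 2) := by
        simp only [aIdx]; rw [if_neg hk, if_pos (by omega)]; push_cast; omega
      rw [ha, WW_eval_r2 (by omega) (by omega) (by omega)
          (by rw [hl1]; omega) ⟨by omega, by omega, by rw [hl1]; omega⟩,
        show x + s + ((i : ℤ) + 2) - s = x + ((i : ℤ) + 2) by ring]
      exact mem_OmegaX m x η hη _ (by omega) (by omega)

/-- the configuration path -/
def Zc (x s r : ℤ) (m : ℕ) : ℕ → (ℤ → Bool) → (ℤ → Bool)
  | 0 => id
  | t + 1 => fun η => exchange (uu x s r m t) (vv x s r m t) (Zc x s r m t η)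

lemma Zc_eq_WW (hm : 2 ≤ m) (H : SgnHyp x s r m) :
    ∀ t, t ≤ 2 * m + 3 → ∀ η : ℤ → Bool, Zc x s r m t η = WW x s r m t η := by
  intro t
  induction t with
  | zero => intro _ η; rw [WW_zero hm H]; rfl
  | succ k ih =>
    intro hk η
    show exchange _ _ (Zc x s r m k η) = _
    rw [ih (by omega) η]
    exact WW_step hm H (by omega)

lemma Zc_final (hm : 2 ≤ m) (H : SgnHyp x s r m) (η : ℤ → Bool) :
    Zc x s r m (2 * m + 3) η = exchange x (x + r) η := by
  rw [Zc_eq_WW hm H (2 * m + 3) (le_refl _) η]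
  · rw [WW_final hm H]

lemma window_Zc (hm : 2 ≤ m) (H : SgnHyp x s r m) (hη : η ∈ OmegaX m x) {t : ℕ}
    (ht : t < 2 * m + 3) :
    1 ≤ crate m (uu x s r m t) (vv x s r m t) (Zc x s r m t η) := by
  rw [Zc_eq_WW hm H t (by omega) η]
  exact window hm H hη ht

lemma measurable_exchange' (u v : ℤ) : Measurable (exchange u v) := by
  apply measurable_pi_lambda
  intro z
  simp only [exchange]
  split_ifs <;> exact measurable_pi_apply _

lemma measurable_Zc (x s r : ℤ) (m : ℕ) : ∀ t, Measurable (Zc x s r m t) := by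
  intro t
  induction t with
  | zero => exact measurable_id
  | succ k ih => exact (measurable_exchange' _ _).comp ih

lemma map_Zc (x s r : ℤ) (m : ℕ) (ν : MeasureTheory.Measure (ℤ → Bool))
    (hex : ∀ u v : ℤ, ν.map (exchange u v) = ν) : ∀ t, ν.map (Zc x s r m t) = ν := by
  intro t
  induction t with
  | zero => exact MeasureTheory.Measure.map_id
  | succ k ih =>
    show ν.map ((exchange (uu x s r m k) (vv x s r m k)) ∘ (Zc x s r m k)) = ν
    rw [← MeasureTheory.Measure.map_map (measurable_exchange' _ _) (measurable_Zc x s r m k),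
      ih, hex]

end Wind



section PerX

variable {m : ℕ} {x s r : ℤ} {f : (ℤ → Bool) → ℝ} {ν : Measure (ℤ → Bool)}

lemma measurableSet_OmegaX (m : ℕ) (x : ℤ) : MeasurableSet (OmegaX m x) := by
  have : OmegaX m x = ⋂ j ∈ Finset.Icc 1 m, {η : ℤ → Bool | η (x + (j : ℤ)) = true} := by
    ext η; simp [OmegaX]
  rw [this]
  refine MeasurableSet.biInter (Finset.Icc 1 m).countable_toSet (fun j _ => ?_)
  have : {η : ℤ → Bool | η (x + (j : ℤ)) = true} =
      (fun η : ℤ → Bool => η (x + (j : ℤ))) ⁻¹' {true} := by ext η; simp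
  rw [this]
  exact (measurable_pi_apply _) (MeasurableSet.singleton true)

lemma measurable_bval : Measurable bval := measurable_from_top

lemma measurable_crate (m : ℕ) (u v : ℤ) : Measurable (crate m u v) := by
  unfold crate Srate
  apply Measurable.add
  · apply Finset.measurable_sum
    intro j _
    apply Measurable.add <;>
      exact Finset.measurable_prod _ fun i _ => measurable_bval.comp (measurable_pi_apply _)
  · exact measurable_const

lemma measurable_sqrtf (hf : Measurable f) : Measurable fun η => Real.sqrt (f η) :=
  Real.continuous_sqrt.measurable.comp hf

lemma measurable_Ixy_integrand (hf : Measurable f) (u v : ℤ) :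
    Measurable fun ζ => ENNReal.ofReal
      (crate m u v ζ * (Real.sqrt (f (exchange u v ζ)) - Real.sqrt (f ζ)) ^ 2) := by
  apply ENNReal.measurable_ofReal.comp
  apply Measurable.mul (measurable_crate m u v)
  exact (((measurable_sqrtf hf).comp (measurable_exchange' u v)).sub
    (measurable_sqrtf hf)).pow_const 2

/-- main per-site estimate -/
lemma perx (hm : 2 ≤ m) (H : SgnHyp x s r m) (hprob : IsProbabilityMeasure ν)
    (hex : ∀ u v : ℤ, ν.map (exchange u v) = ν) (hf : Measurable f) :
    ∫⁻ η in OmegaX m x,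
        ENNReal.ofReal ((Real.sqrt (f (exchange x (x + r) η)) - Real.sqrt (f η)) ^ 2) ∂ν ≤
      (2 * m + 3 : ℕ) * ∑ t ∈ Finset.range (2 * m + 3),
        Ixy m ν f (uu x s r m t) (vv x s r m t) := by
  set n := 2 * m + 3 with hn
  rw [← lintegral_indicator (measurableSet_OmegaX m x)]
  have hpt : ∀ η : ℤ → Bool,
      (OmegaX m x).indicator (fun η => ENNReal.ofReal
        ((Real.sqrt (f (exchange x (x + r) η)) - Real.sqrt (f η)) ^ 2)) η ≤
      ∑ t ∈ Finset.range n, (n : ENNReal) * ENNReal.ofReal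
        (crate m (uu x s r m t) (vv x s r m t) (Zc x s r m t η) *
          (Real.sqrt (f (exchange (uu x s r m t) (vv x s r m t) (Zc x s r m t η))) -
            Real.sqrt (f (Zc x s r m t η))) ^ 2) := by
    intro η
    by_cases hmem : η ∈ OmegaX m x
    · rw [Set.indicator_of_mem hmem]
      have e1 : Real.sqrt (f (exchange x (x + r) η)) - Real.sqrt (f η) =
          ∑ t ∈ Finset.range n, (Real.sqrt (f (Zc x s r m (t + 1) η)) -
            Real.sqrt (f (Zc x s r m t η))) := by
        rw [Finset.sum_range_sub (fun t => Real.sqrt (f (Zc x s r m t η))) n]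
        rw [Zc_final hm H η]
        rfl
      have e2 : (Real.sqrt (f (exchange x (x + r) η)) - Real.sqrt (f η)) ^ 2 ≤
          (n : ℝ) * ∑ t ∈ Finset.range n,
            (Real.sqrt (f (Zc x s r m (t + 1) η)) - Real.sqrt (f (Zc x s r m t η))) ^ 2 := by
        rw [e1]
        have := sq_sum_le_card_mul_sum_sq (s := Finset.range n)
          (f := fun t => Real.sqrt (f (Zc x s r m (t + 1) η)) - Real.sqrt (f (Zc x s r m t η)))
        simpa using this
      have e3 : (n : ℝ) * ∑ t ∈ Finset.range n,
            (Real.sqrt (f (Zc x s r m (t + 1) η)) - Real.sqrt (f (Zc x s r m t η))) ^ 2 ≤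
          (n : ℝ) * ∑ t ∈ Finset.range n,
            crate m (uu x s r m t) (vv x s r m t) (Zc x s r m t η) *
              (Real.sqrt (f (Zc x s r m (t + 1) η)) - Real.sqrt (f (Zc x s r m t η))) ^ 2 := by
        apply mul_le_mul_of_nonneg_left _ (by positivity)
        apply Finset.sum_le_sum
        intro t ht
        have h1 : 1 ≤ crate m (uu x s r m t) (vv x s r m t) (Zc x s r m t η) :=
          window_Zc hm H hmem (Finset.mem_range.mp ht)
        nlinarith [sq_nonneg (Real.sqrt (f (Zc x s r m (t + 1) η)) -
          Real.sqrt (f (Zc x s r m t η)))]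
      calc ENNReal.ofReal ((Real.sqrt (f (exchange x (x + r) η)) - Real.sqrt (f η)) ^ 2)
          ≤ ENNReal.ofReal ((n : ℝ) * ∑ t ∈ Finset.range n,
              crate m (uu x s r m t) (vv x s r m t) (Zc x s r m t η) *
                (Real.sqrt (f (Zc x s r m (t + 1) η)) -
                  Real.sqrt (f (Zc x s r m t η))) ^ 2) :=
            ENNReal.ofReal_le_ofReal (le_trans e2 e3)
        _ ≤ ∑ t ∈ Finset.range n, (n : ENNReal) * ENNReal.ofReal
              (crate m (uu x s r m t) (vv x s r m t) (Zc x s r m t η) *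
                (Real.sqrt (f (exchange (uu x s r m t) (vv x s r m t) (Zc x s r m t η))) -
                  Real.sqrt (f (Zc x s r m t η))) ^ 2) := by
            rw [ENNReal.ofReal_mul (by positivity), ENNReal.ofReal_natCast,
              ENNReal.ofReal_sum_of_nonneg (fun t _ => mul_nonneg (crate_nonneg _ _ _ _)
                (sq_nonneg _)), Finset.mul_sum]
            exact le_of_eq (Finset.sum_congr rfl fun t _ => rfl)
    · rw [Set.indicator_of_notMem hmem]
      exact zero_le
  calc ∫⁻ η, (OmegaX m x).indicator (fun η => ENNReal.ofReal
        ((Real.sqrt (f (exchange x (x + r) η)) - Real.sqrt (f η)) ^ 2)) η ∂ν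
      ≤ ∫⁻ η, ∑ t ∈ Finset.range n, (n : ENNReal) * ENNReal.ofReal
          (crate m (uu x s r m t) (vv x s r m t) (Zc x s r m t η) *
            (Real.sqrt (f (exchange (uu x s r m t) (vv x s r m t) (Zc x s r m t η))) -
              Real.sqrt (f (Zc x s r m t η))) ^ 2) ∂ν := lintegral_mono hpt
    _ = ∑ t ∈ Finset.range n, ∫⁻ η, (n : ENNReal) * ENNReal.ofReal
          (crate m (uu x s r m t) (vv x s r m t) (Zc x s r m t η) *
            (Real.sqrt (f (exchange (uu x s r m t) (vv x s r m t) (Zc x s r m t η))) -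
              Real.sqrt (f (Zc x s r m t η))) ^ 2) ∂ν := by
        apply lintegral_finset_sum
        intro t _
        exact measurable_const.mul
          ((measurable_Ixy_integrand hf _ _).comp (measurable_Zc x s r m t))
    _ = (n : ENNReal) * ∑ t ∈ Finset.range n,
          Ixy m ν f (uu x s r m t) (vv x s r m t) := by
        rw [Finset.mul_sum]
        apply Finset.sum_congr rfl
        intro t _
        rw [lintegral_const_mul' _ _ (ENNReal.natCast_ne_top n)]
        congr 1
        conv_rhs => rw [Ixy, ← map_Zc x s r m ν hex t,
          lintegral_map (measurable_Ixy_integrand hf _ _) (measurable_Zc x s r m t)]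

/-- base estimate for small `r` -/
lemma perx_base (hm : 2 ≤ m) (x r : ℤ) (hf : Measurable f) :
    ∫⁻ η in OmegaX m x,
        ENNReal.ofReal ((Real.sqrt (f (exchange x (x + r) η)) - Real.sqrt (f η)) ^ 2) ∂ν ≤
      Ixy m ν f x (x + r) := by
  rw [← lintegral_indicator (measurableSet_OmegaX m x)]
  apply lintegral_mono
  intro η
  by_cases hmem : η ∈ OmegaX m x
  · rw [Set.indicator_of_mem hmem]
    apply ENNReal.ofReal_le_ofReal
    have h1 := crate_base m hm x (x + r) η hmem
    nlinarith [sq_nonneg (Real.sqrt (f (exchange x (x + r) η)) - Real.sqrt (f η))]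
  · rw [Set.indicator_of_notMem hmem]
    exact zero_le

end PerX




section Assemble

variable {γ cγ : ℝ} {m : ℕ} {ν : Measure (ℤ → Bool)} {f : (ℤ → Bool) → ℝ}

noncomputable def Kp (cγ γ : ℝ) (m : ℕ) (ν : Measure (ℤ → Bool)) (f : (ℤ → Bool) → ℝ)
    (q : ℤ × ℤ) : ENNReal :=
  ENNReal.ofReal (transP cγ γ (q.2 - q.1)) * Ixy m ν f q.1 q.2

lemma four_Dform :
    (4 : ENNReal) * Dform cγ γ m ν f = ∑' q : ℤ × ℤ, Kp cγ γ m ν f q := by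
  rw [Dform, ← mul_assoc, show (4 : ENNReal) * (1 / 4) = 1 by
    rw [one_div]; exact ENNReal.mul_inv_cancel (by norm_num) (by norm_num), one_mul]
  rfl

lemma Tz_shift (c z : ℤ) :
    ∑' x : ℤ, Ixy m ν f (x + c) (x + c + z) = ∑' x : ℤ, Ixy m ν f x (x + z) :=
  (Equiv.addRight c).tsum_eq (fun y => Ixy m ν f y (y + z))

lemma weighted_single (z : ℤ) :
    ENNReal.ofReal (transP cγ γ z) * ∑' x : ℤ, Ixy m ν f x (x + z) ≤
      4 * Dform cγ γ m ν f := by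
  rw [four_Dform, ← ENNReal.tsum_mul_left]
  have h : ∀ x : ℤ, ENNReal.ofReal (transP cγ γ z) * Ixy m ν f x (x + z) =
      Kp cγ γ m ν f (x, x + z) := by
    intro x; simp [Kp, add_sub_cancel_left]
  rw [tsum_congr h]
  exact ENNReal.tsum_comp_le_tsum_of_injective
    (f := fun x : ℤ => ((x, x + z) : ℤ × ℤ))
    (fun a b hab => (Prod.ext_iff.mp hab).1) _

lemma weighted_finset (S : Finset ℤ) (e : ℤ → ℤ) (he : Function.Injective e) :
    ∑ s₀ ∈ S, ENNReal.ofReal (transP cγ γ (e s₀)) * (∑' x : ℤ, Ixy m ν f x (x + e s₀)) ≤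
      4 * Dform cγ γ m ν f := by
  rw [four_Dform, ← Finset.tsum_subtype]
  have h1 : ∀ s₀ : {x // x ∈ S},
      ENNReal.ofReal (transP cγ γ (e ↑s₀)) * (∑' x : ℤ, Ixy m ν f x (x + e ↑s₀)) =
        ∑' x : ℤ, Kp cγ γ m ν f (x, x + e ↑s₀) := by
    intro s₀
    rw [← ENNReal.tsum_mul_left]
    exact tsum_congr (fun x => by simp [Kp, add_sub_cancel_left])
  rw [tsum_congr h1]
  have heq := (ENNReal.tsum_prod'
    (f := fun p : {x // x ∈ S} × ℤ => Kp cγ γ m ν f (p.2, p.2 + e ↑p.1))).symm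
  rw [heq]
  have hinj : Function.Injective
      (fun p : {x // x ∈ S} × ℤ => ((p.2, p.2 + e ↑p.1) : ℤ × ℤ)) := by
    rintro ⟨a, x⟩ ⟨b, y⟩ hab
    obtain ⟨h1', h2'⟩ := Prod.ext_iff.mp hab
    simp only at h1' h2'
    subst h1'
    have : e ↑a = e ↑b := by omega
    have : (a : ℤ) = (b : ℤ) := he this
    simp [Prod.ext_iff, Subtype.ext this]
  exact ENNReal.tsum_comp_le_tsum_of_injective hinj _

lemma uu_vv_offset {x s r : ℤ} {t : ℕ} :
    uu x s r m t = x + uu 0 s r m t ∧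
      vv x s r m t = x + uu 0 s r m t + (if t = m + 1 then r - s else s) := by
  constructor
  · rw [uu, uu]; split_ifs <;> omega
  · rw [vv, uu]; split_ifs <;> omega

/-- summed form of the per-site estimate -/
lemma sum_perx (hm : 2 ≤ m) {s r : ℤ} (H : SgnHyp 0 s r m)
    (hprob : IsProbabilityMeasure ν)
    (hex : ∀ u v : ℤ, ν.map (exchange u v) = ν) (hf : Measurable f) :
    (∑' x : ℤ, ∫⁻ η in OmegaX m x,
        ENNReal.ofReal ((Real.sqrt (f (exchange x (x + r) η)) - Real.sqrt (f η)) ^ 2) ∂ν) ≤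
      ((2 * m + 3 : ℕ) : ENNReal) *
        (((2 * m + 2 : ℕ) : ENNReal) * ∑' x : ℤ, Ixy m ν f x (x + s) +
          ∑' x : ℤ, Ixy m ν f x (x + (r - s))) := by
  have step1 := ENNReal.tsum_le_tsum (fun x : ℤ =>
    perx (m := m) (x := x) (s := s) (r := r) hm H hprob hex hf)
  refine le_trans step1 ?_
  rw [ENNReal.tsum_mul_left]
  apply mul_le_mul_right
  rw [Summable.tsum_finsetSum (fun i _ => ENNReal.summable)]
  have hper : ∀ t ∈ Finset.range (2 * m + 3),
      (∑' x : ℤ, Ixy m ν f (uu x s r m t) (vv x s r m t)) =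
        (if t = m + 1 then ∑' x : ℤ, Ixy m ν f x (x + (r - s))
          else ∑' x : ℤ, Ixy m ν f x (x + s)) := by
    intro t _
    have h2 : ∀ x : ℤ, Ixy m ν f (uu x s r m t) (vv x s r m t) =
        Ixy m ν f (x + uu 0 s r m t) (x + uu 0 s r m t + (if t = m + 1 then r - s else s)) := by
      intro x
      rw [show vv x s r m t = x + uu 0 s r m t + (if t = m + 1 then r - s else s) from
          uu_vv_offset.2,
        show uu x s r m t = x + uu 0 s r m t from uu_vv_offset.1]
    rw [tsum_congr h2]
    by_cases htm : t = m + 1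
    · simp only [htm, if_pos rfl]
      exact Tz_shift _ _
    · simp only [if_neg htm]
      exact Tz_shift _ _
  rw [Finset.sum_congr rfl hper]
  have hmem : m + 1 ∈ Finset.range (2 * m + 3) := Finset.mem_range.mpr (by omega)
  rw [← Finset.insert_erase hmem, Finset.sum_insert (Finset.notMem_erase _ _)]
  rw [if_pos rfl]
  have herase : ∀ t ∈ (Finset.range (2 * m + 3)).erase (m + 1),
      (if t = m + 1 then ∑' x : ℤ, Ixy m ν f x (x + (r - s))
        else ∑' x : ℤ, Ixy m ν f x (x + s)) = ∑' x : ℤ, Ixy m ν f x (x + s) := by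
    intro t ht
    rw [if_neg (Finset.ne_of_mem_erase ht)]
  rw [Finset.sum_congr rfl herase, Finset.sum_const,
    Finset.card_erase_of_mem hmem, Finset.card_range]
  rw [show 2 * m + 3 - 1 = 2 * m + 2 by omega, nsmul_eq_mul]
  rw [add_comm]

lemma sum_perx_base (hm : 2 ≤ m) {r : ℤ} (hf : Measurable f) :
    (∑' x : ℤ, ∫⁻ η in OmegaX m x,
        ENNReal.ofReal ((Real.sqrt (f (exchange x (x + r) η)) - Real.sqrt (f η)) ^ 2) ∂ν) ≤
      ∑' x : ℤ, Ixy m ν f x (x + r) :=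
  ENNReal.tsum_le_tsum (fun x : ℤ => perx_base hm x r hf)

end Assemble


section Final

variable {γ cγ : ℝ}

lemma transP_pos (hcγ : 0 < cγ) {z : ℤ} (hz : z ≠ 0) : 0 < transP cγ γ z := by
  rw [transP, if_neg hz]
  exact mul_pos hcγ (Real.rpow_pos_of_pos (abs_pos.mpr (Int.cast_ne_zero.mpr hz)) _)

lemma transP_ge (hcγ : 0 < cγ) (hγ0 : 0 ≤ 1 + γ) {z : ℤ} (hz : z ≠ 0) {R : ℝ}
    (hR : |(z : ℝ)| ≤ R) : cγ * R ^ (-(1 + γ)) ≤ transP cγ γ z := by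
  rw [transP, if_neg hz]
  apply mul_le_mul_of_nonneg_left _ hcγ.le
  have h0 : (0 : ℝ) < |(z : ℝ)| := abs_pos.mpr (Int.cast_ne_zero.mpr hz)
  rw [Real.rpow_neg h0.le, Real.rpow_neg (by linarith : (0:ℝ) ≤ R)]
  exact inv_anti₀ (Real.rpow_pos_of_pos h0 _) (Real.rpow_le_rpow h0.le hR hγ0)

lemma transP_ratio (hcγ : 0 < cγ) (hγ0 : 0 ≤ 1 + γ) {a b : ℤ} (ha : a ≠ 0) (hb : b ≠ 0)
    (h4 : |(b : ℝ)| ≤ 4 * |(a : ℝ)|) :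
    transP cγ γ a ≤ (4 : ℝ) ^ (1 + γ) * transP cγ γ b := by
  rw [transP, if_neg ha, transP, if_neg hb]
  have h0a : (0 : ℝ) < |(a : ℝ)| := abs_pos.mpr (Int.cast_ne_zero.mpr ha)
  have h0b : (0 : ℝ) < |(b : ℝ)| := abs_pos.mpr (Int.cast_ne_zero.mpr hb)
  have hpa := Real.rpow_pos_of_pos h0a (1 + γ)
  have hpb := Real.rpow_pos_of_pos h0b (1 + γ)
  have key : |(b : ℝ)| ^ (1 + γ) ≤ (4 : ℝ) ^ (1 + γ) * |(a : ℝ)| ^ (1 + γ) := by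
    rw [← Real.mul_rpow (by norm_num) h0a.le]
    exact Real.rpow_le_rpow h0b.le h4 hγ0
  have hstep : (|(a : ℝ)| ^ (1 + γ))⁻¹ ≤ (4 : ℝ) ^ (1 + γ) * (|(b : ℝ)| ^ (1 + γ))⁻¹ := by
    rw [inv_eq_one_div, inv_eq_one_div, mul_one_div, div_le_div_iff₀ hpa hpb, one_mul]
    exact key
  rw [Real.rpow_neg h0a.le, Real.rpow_neg h0b.le]
  calc cγ * (|(a : ℝ)| ^ (1 + γ))⁻¹ ≤
      cγ * ((4 : ℝ) ^ (1 + γ) * (|(b : ℝ)| ^ (1 + γ))⁻¹) :=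
        mul_le_mul_of_nonneg_left hstep hcγ.le
    _ = (4 : ℝ) ^ (1 + γ) * (cγ * (|(b : ℝ)| ^ (1 + γ))⁻¹) := by ring

end Final


theorem stmt18 (γ cγ : ℝ) (hγ : γ ∈ Set.Ioo (0 : ℝ) 2) (hcγ : 0 < cγ)
    (hnorm : ∑' z : ℤ, transP cγ γ z = 1)
    (m : ℕ) (hm : 2 ≤ m) (b : ℝ) (hb : b ∈ Set.Ioo (0 : ℝ) 1)
    (ν : Measure (ℤ → Bool)) (hprob : IsProbabilityMeasure ν)
    (hcyl : ∀ (s : Finset ℤ) (g : ℤ → Bool),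
      ν {η : ℤ → Bool | ∀ i ∈ s, η i = g i} =
        ∏ i ∈ s, ENNReal.ofReal (if g i then b else 1 - b)) :
    ∃ C : ℝ, 0 < C ∧
      ∀ r : ℤ, r ≠ 0 →
        ∀ f : (ℤ → Bool) → ℝ, Measurable f → (∀ η, 0 ≤ f η) → (∫ η, f η ∂ν = 1) →
          (∑' x : ℤ, ∫⁻ η in OmegaX m x,
              ENNReal.ofReal
                ((Real.sqrt (f (exchange x (x + r) η)) - Real.sqrt (f η)) ^ 2) ∂ν) ≤
            ENNReal.ofReal (C * |(r : ℝ)| ^ γ) * Dform cγ γ m ν f := by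
  classical
  have hex : ∀ u v : ℤ, ν.map (exchange u v) = ν := map_exchange ν hprob b hcyl
  have hγ0 : (0 : ℝ) < γ := hγ.1
  have hγ1 : (0 : ℝ) ≤ 1 + γ := by linarith
  set ER : ℝ := ((2 * m + 3 : ℕ) : ℝ) * (((2 * m + 2 : ℕ) : ℝ) * 4 + (4 : ℝ) ^ (1 + γ) * 4)
    with hER
  have hERpos : 0 < ER := by
    have h1 : (0 : ℝ) < ((2 * m + 3 : ℕ) : ℝ) := by positivity
    have h2 : (0 : ℝ) < (4 : ℝ) ^ (1 + γ) := Real.rpow_pos_of_pos (by norm_num) _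
    positivity
  set CA : ℝ := 4 * (8 * (m : ℝ) + 16) / cγ with hCA
  set CB : ℝ := 8 * ER / cγ with hCB
  have hCApos : 0 < CA := by positivity
  have hCBpos : 0 < CB := by positivity
  refine ⟨max CA CB, lt_max_of_lt_left hCApos, ?_⟩
  intro r hr f hfm hf0 hfint
  set ρ : ℤ := |r| with hρdef
  have hρchoice : ρ = r ∨ ρ = -r := abs_choice r
  have hρpos : 0 < ρ := abs_pos.mpr hr
  have hρR : ((ρ : ℤ) : ℝ) = |(r : ℝ)| := by rw [hρdef]; exact Int.cast_abs
  have habs0 : (0 : ℝ) < |(r : ℝ)| := abs_pos.mpr (Int.cast_ne_zero.mpr hr)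
  have hrpowpos : (0 : ℝ) < |(r : ℝ)| ^ γ := Real.rpow_pos_of_pos habs0 _
  rcases le_or_gt ρ (8 * (m : ℤ) + 16) with hsmall | hbig
  · -- small r : direct bound
    have h1 := sum_perx_base (m := m) (ν := ν) (f := f) hm (r := r) hfm
    have h2 := weighted_single (γ := γ) (cγ := cγ) (m := m) (ν := ν) (f := f) r
    have hppos : 0 < transP cγ γ r := transP_pos hcγ hr
    have hb0 : ENNReal.ofReal (transP cγ γ r) ≠ 0 := (ENNReal.ofReal_pos.mpr hppos).ne'
    have hbt : ENNReal.ofReal (transP cγ γ r) ≠ ⊤ := ENNReal.ofReal_ne_top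
    have h3 : (∑' x : ℤ, Ixy m ν f x (x + r)) ≤
        (ENNReal.ofReal (transP cγ γ r))⁻¹ * (4 * Dform cγ γ m ν f) := by
      calc (∑' x : ℤ, Ixy m ν f x (x + r)) =
          (ENNReal.ofReal (transP cγ γ r))⁻¹ *
            (ENNReal.ofReal (transP cγ γ r) * ∑' x : ℤ, Ixy m ν f x (x + r)) := by
            rw [← mul_assoc, ENNReal.inv_mul_cancel hb0 hbt, one_mul]
        _ ≤ _ := mul_le_mul_right h2 _
    have hcoef : (ENNReal.ofReal (transP cγ γ r))⁻¹ * 4 ≤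
        ENNReal.ofReal (max CA CB * |(r : ℝ)| ^ γ) := by
      rw [← ENNReal.ofReal_inv_of_pos hppos, ← ENNReal.ofReal_ofNat 4,
        ← ENNReal.ofReal_mul (inv_nonneg.mpr hppos.le)]
      apply ENNReal.ofReal_le_ofReal
      have hinv : (transP cγ γ r)⁻¹ = cγ⁻¹ * |(r : ℝ)| ^ (1 + γ) := by
        rw [transP, if_neg hr, mul_inv, Real.rpow_neg habs0.le, inv_inv]
      have hsplit : |(r : ℝ)| ^ (1 + γ) = |(r : ℝ)| * |(r : ℝ)| ^ γ := by
        rw [Real.rpow_add habs0, Real.rpow_one]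
      have hrle : |(r : ℝ)| ≤ 8 * (m : ℝ) + 16 := by
        rw [← hρR]
        have : ((ρ : ℤ) : ℝ) ≤ ((8 * (m : ℤ) + 16 : ℤ) : ℝ) := by exact_mod_cast hsmall
        push_cast at this ⊢
        linarith
      calc (transP cγ γ r)⁻¹ * 4 = (4 / cγ) * (|(r : ℝ)| * |(r : ℝ)| ^ γ) := by
            rw [hinv, hsplit]; ring
        _ ≤ (4 / cγ) * ((8 * (m : ℝ) + 16) * |(r : ℝ)| ^ γ) := by
            apply mul_le_mul_of_nonneg_left _ (by positivity)
            exact mul_le_mul_of_nonneg_right hrle hrpowpos.le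
        _ = CA * |(r : ℝ)| ^ γ := by rw [hCA]; ring
        _ ≤ max CA CB * |(r : ℝ)| ^ γ :=
            mul_le_mul_of_nonneg_right (le_max_left _ _) hrpowpos.le
    calc (∑' x : ℤ, ∫⁻ η in OmegaX m x,
            ENNReal.ofReal
              ((Real.sqrt (f (exchange x (x + r) η)) - Real.sqrt (f η)) ^ 2) ∂ν)
        ≤ ∑' x : ℤ, Ixy m ν f x (x + r) := h1
      _ ≤ (ENNReal.ofReal (transP cγ γ r))⁻¹ * (4 * Dform cγ γ m ν f) := h3
      _ = ((ENNReal.ofReal (transP cγ γ r))⁻¹ * 4) * Dform cγ γ m ν f := by ring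
      _ ≤ ENNReal.ofReal (max CA CB * |(r : ℝ)| ^ γ) * Dform cγ γ m ν f :=
          mul_le_mul_left hcoef _
  · -- large r : multiscale bound
    set σ : ℤ := if 0 < r then 1 else -1 with hσdef
    have hσcases : (σ = 1 ∧ 0 < r ∧ ρ = r) ∨ (σ = -1 ∧ r < 0 ∧ ρ = -r) := by
      by_cases h : 0 < r
      · left; exact ⟨if_pos h, h, by omega⟩
      · right; exact ⟨if_neg h, by omega, by omega⟩
    set S : Finset ℤ := Finset.Icc (ρ / 4 + 1) (ρ / 2) with hSdef
    have hcard : 8 * ((S.card : ℤ)) ≥ ρ := by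
      have h := Int.card_Icc (ρ / 4 + 1) (ρ / 2)
      rw [hSdef]
      omega
    -- facts about members of S
    have hSfacts : ∀ s₀ ∈ S, ρ / 4 + 1 ≤ s₀ ∧ s₀ ≤ ρ / 2 := by
      intro s₀ hs₀
      exact Finset.mem_Icc.mp hs₀
    have hσabs : ∀ s₀ ∈ S, |σ * s₀| = s₀ := by
      intro s₀ hs₀
      obtain ⟨h1, h2⟩ := hSfacts s₀ hs₀
      rcases hσcases with ⟨hσ1, _, _⟩ | ⟨hσ1, _, _⟩ <;> rw [hσ1] <;>
        [rw [one_mul]; rw [neg_one_mul, abs_neg]] <;> exact abs_of_pos (by omega)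
    have hrσabs : ∀ s₀ ∈ S, |r - σ * s₀| = ρ - s₀ := by
      intro s₀ hs₀
      obtain ⟨h1, h2⟩ := hSfacts s₀ hs₀
      rcases hσcases with ⟨hσ1, hr1, hr2⟩ | ⟨hσ1, hr1, hr2⟩ <;> rw [hσ1]
      · rw [one_mul, hr2]; exact abs_of_pos (by omega)
      · rw [neg_one_mul, sub_neg_eq_add]
        rw [abs_of_neg (by omega)]
        omega
    have hSgn : ∀ s₀ ∈ S, SgnHyp 0 (σ * s₀) r m := by
      intro s₀ hs₀
      obtain ⟨h1, h2⟩ := hSfacts s₀ hs₀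
      rcases hσcases with ⟨hσ1, hr1, hr2⟩ | ⟨hσ1, hr1, hr2⟩ <;> rw [hσ1]
      · exact Or.inl ⟨by omega, by omega⟩
      · exact Or.inr ⟨by omega, by omega⟩
    set Tz : ℤ → ENNReal := fun z => ∑' x : ℤ, Ixy m ν f x (x + z) with hTz
    have hmain : ∀ s₀ ∈ S,
        (∑' x : ℤ, ∫⁻ η in OmegaX m x,
            ENNReal.ofReal
              ((Real.sqrt (f (exchange x (x + r) η)) - Real.sqrt (f η)) ^ 2) ∂ν) ≤
          ((2 * m + 3 : ℕ) : ENNReal) *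
            (((2 * m + 2 : ℕ) : ENNReal) * Tz (σ * s₀) + Tz (r - σ * s₀)) := by
      intro s₀ hs₀
      exact sum_perx hm (hSgn s₀ hs₀) hprob hex hfm
    set P : ENNReal := ∑ s₀ ∈ S, ENNReal.ofReal (transP cγ γ (σ * s₀)) with hP
    set L : ENNReal := ∑' x : ℤ, ∫⁻ η in OmegaX m x,
        ENNReal.ofReal
          ((Real.sqrt (f (exchange x (x + r) η)) - Real.sqrt (f η)) ^ 2) ∂ν with hL
    set D := Dform cγ γ m ν f with hD
    set κ : ENNReal := ENNReal.ofReal ((4 : ℝ) ^ (1 + γ)) with hκ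
    have hσne : σ ≠ 0 := by rcases hσcases with ⟨h, _, _⟩ | ⟨h, _, _⟩ <;> omega
    have hinj1 : Function.Injective (fun s₀ : ℤ => σ * s₀) := fun a b h => by
      simpa [hσne] using mul_left_cancel₀ hσne h
    have hinj2 : Function.Injective (fun s₀ : ℤ => r - σ * s₀) := fun a b h => by
      simp only at h
      have : σ * a = σ * b := by omega
      exact mul_left_cancel₀ hσne this
    have hbound1 : ∑ s₀ ∈ S, ENNReal.ofReal (transP cγ γ (σ * s₀)) * Tz (σ * s₀) ≤
        4 * D := by
      have := weighted_finset (γ := γ) (cγ := cγ) (m := m) (ν := ν) (f := f) S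
        (fun s₀ => σ * s₀) hinj1
      simpa [hTz] using this
    have hbound2 : ∑ s₀ ∈ S, ENNReal.ofReal (transP cγ γ (σ * s₀)) * Tz (r - σ * s₀) ≤
        κ * (4 * D) := by
      have hterm : ∀ s₀ ∈ S, ENNReal.ofReal (transP cγ γ (σ * s₀)) * Tz (r - σ * s₀) ≤
          κ * (ENNReal.ofReal (transP cγ γ (r - σ * s₀)) * Tz (r - σ * s₀)) := by
        intro s₀ hs₀
        obtain ⟨h1, h2⟩ := hSfacts s₀ hs₀
        have hane : σ * s₀ ≠ 0 := by
          intro h; apply hσne; rcases mul_eq_zero.mp h with h' | h'; exact h'; omega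
        have hbne : r - σ * s₀ ≠ 0 := by
          have := hrσabs s₀ hs₀
          intro h; rw [h] at this; simp at this; omega
        have h4 : |((r - σ * s₀ : ℤ) : ℝ)| ≤ 4 * |((σ * s₀ : ℤ) : ℝ)| := by
          rw [← Int.cast_abs, ← Int.cast_abs]
          have hz : |r - σ * s₀| ≤ 4 * |σ * s₀| := by
            rw [hσabs s₀ hs₀, hrσabs s₀ hs₀]; omega
          exact_mod_cast hz
        have := transP_ratio (γ := γ) hcγ hγ1 hane hbne h4
        rw [← mul_assoc]
        apply mul_le_mul_left
        rw [hκ, ← ENNReal.ofReal_mul (Real.rpow_pos_of_pos (by norm_num) _).le]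
        exact ENNReal.ofReal_le_ofReal this
      calc ∑ s₀ ∈ S, ENNReal.ofReal (transP cγ γ (σ * s₀)) * Tz (r - σ * s₀) ≤
          ∑ s₀ ∈ S, κ * (ENNReal.ofReal (transP cγ γ (r - σ * s₀)) * Tz (r - σ * s₀)) :=
            Finset.sum_le_sum hterm
        _ = κ * ∑ s₀ ∈ S, ENNReal.ofReal (transP cγ γ (r - σ * s₀)) * Tz (r - σ * s₀) := by
            rw [Finset.mul_sum]
        _ ≤ κ * (4 * D) := by
            apply mul_le_mul_right
            have := weighted_finset (γ := γ) (cγ := cγ) (m := m) (ν := ν) (f := f) S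
              (fun s₀ => r - σ * s₀) hinj2
            simpa [hTz] using this
    have hLP : L * P ≤ (((2 * m + 3 : ℕ) : ENNReal) *
        (((2 * m + 2 : ℕ) : ENNReal) * 4 + κ * 4)) * D := by
      calc L * P = ∑ s₀ ∈ S, L * ENNReal.ofReal (transP cγ γ (σ * s₀)) := by
            rw [hP, Finset.mul_sum]
        _ ≤ ∑ s₀ ∈ S, (((2 * m + 3 : ℕ) : ENNReal) *
              (((2 * m + 2 : ℕ) : ENNReal) * Tz (σ * s₀) + Tz (r - σ * s₀))) *
                ENNReal.ofReal (transP cγ γ (σ * s₀)) :=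
            Finset.sum_le_sum (fun s₀ hs₀ => mul_le_mul_left (hmain s₀ hs₀) _)
        _ = ((2 * m + 3 : ℕ) : ENNReal) * ((2 * m + 2 : ℕ) : ENNReal) *
              (∑ s₀ ∈ S, ENNReal.ofReal (transP cγ γ (σ * s₀)) * Tz (σ * s₀)) +
            ((2 * m + 3 : ℕ) : ENNReal) *
              (∑ s₀ ∈ S, ENNReal.ofReal (transP cγ γ (σ * s₀)) * Tz (r - σ * s₀)) := by
            rw [Finset.mul_sum, Finset.mul_sum, ← Finset.sum_add_distrib]
            apply Finset.sum_congr rfl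
            intro s₀ _
            ring
        _ ≤ ((2 * m + 3 : ℕ) : ENNReal) * ((2 * m + 2 : ℕ) : ENNReal) * (4 * D) +
            ((2 * m + 3 : ℕ) : ENNReal) * (κ * (4 * D)) :=
            add_le_add (mul_le_mul_right hbound1 _) (mul_le_mul_right hbound2 _)
        _ = (((2 * m + 3 : ℕ) : ENNReal) *
              (((2 * m + 2 : ℕ) : ENNReal) * 4 + κ * 4)) * D := by ring
    -- lower bound for P
    set qlow : ℝ := (cγ / 8) * |(r : ℝ)| ^ (-γ) with hqlow
    have hqlowpos : 0 < qlow := by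
      have := Real.rpow_pos_of_pos habs0 (-γ)
      positivity
    have hPlow : ENNReal.ofReal qlow ≤ P := by
      have hterm : ∀ s₀ ∈ S,
          ENNReal.ofReal (cγ * |(r : ℝ)| ^ (-(1 + γ))) ≤
            ENNReal.ofReal (transP cγ γ (σ * s₀)) := by
        intro s₀ hs₀
        obtain ⟨h1, h2⟩ := hSfacts s₀ hs₀
        apply ENNReal.ofReal_le_ofReal
        apply transP_ge hcγ hγ1
        · intro h; rcases mul_eq_zero.mp h with h' | h'; exact hσne h'; omega
        · rw [← Int.cast_abs, ← hρR]
          have : |σ * s₀| ≤ ρ := by rw [hσabs s₀ hs₀]; omega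
          exact_mod_cast this
      have hsum := Finset.card_nsmul_le_sum S _ _ hterm
      rw [nsmul_eq_mul] at hsum
      refine le_trans ?_ hsum
      rw [← ENNReal.ofReal_natCast S.card,
        ← ENNReal.ofReal_mul (Nat.cast_nonneg (α := ℝ) S.card)]
      apply ENNReal.ofReal_le_ofReal
      have hcardR : ((S.card : ℕ) : ℝ) ≥ |(r : ℝ)| / 8 := by
        rw [← hρR]
        have h8 : ((ρ : ℤ) : ℝ) ≤ 8 * ((S.card : ℤ) : ℝ) := by exact_mod_cast hcard
        push_cast at h8 ⊢
        linarith
      have hsplit : |(r : ℝ)| ^ (-γ) = |(r : ℝ)| * |(r : ℝ)| ^ (-(1 + γ)) := by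
        rw [show (-γ) = 1 + (-(1 + γ)) by ring, Real.rpow_add habs0, Real.rpow_one]
      rw [hqlow, hsplit]
      have hpw : (0:ℝ) < |(r : ℝ)| ^ (-(1 + γ)) := Real.rpow_pos_of_pos habs0 _
      calc cγ / 8 * (|(r : ℝ)| * |(r : ℝ)| ^ (-(1 + γ))) =
          (|(r : ℝ)| / 8) * (cγ * |(r : ℝ)| ^ (-(1 + γ))) := by ring
        _ ≤ ((S.card : ℕ) : ℝ) * (cγ * |(r : ℝ)| ^ (-(1 + γ))) :=
            mul_le_mul_of_nonneg_right hcardR (by positivity)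
    have hP0 : P ≠ 0 := by
      have : (0 : ENNReal) < ENNReal.ofReal qlow := ENNReal.ofReal_pos.mpr hqlowpos
      exact (lt_of_lt_of_le this hPlow).ne'
    have hPtop : P ≠ ⊤ := by
      rw [hP]
      exact (ENNReal.sum_lt_top.mpr (fun a _ => ENNReal.ofReal_lt_top)).ne
    have hdiv : L ≤ ((((2 * m + 3 : ℕ) : ENNReal) *
        (((2 * m + 2 : ℕ) : ENNReal) * 4 + κ * 4)) * D) / P :=
      (ENNReal.le_div_iff_mul_le (Or.inl hP0) (Or.inl hPtop)).mpr hLP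
    have hdiv2 : L ≤ ((((2 * m + 3 : ℕ) : ENNReal) *
        (((2 * m + 2 : ℕ) : ENNReal) * 4 + κ * 4)) * D) / ENNReal.ofReal qlow :=
      le_trans hdiv (ENNReal.div_le_div_left hPlow _)
    -- identify the ENNReal constant with ofReal ER
    have hEeq : (((2 * m + 3 : ℕ) : ENNReal) *
        (((2 * m + 2 : ℕ) : ENNReal) * 4 + κ * 4)) = ENNReal.ofReal ER := by
      rw [hER, ENNReal.ofReal_mul (by positivity),
        ENNReal.ofReal_add (by positivity) (by positivity),
        ENNReal.ofReal_mul (by positivity), ENNReal.ofReal_mul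
          (Real.rpow_pos_of_pos (by norm_num) _).le,
        ENNReal.ofReal_natCast, ENNReal.ofReal_natCast, ENNReal.ofReal_ofNat, hκ]
    have hfinal : ((ENNReal.ofReal ER) * D) / ENNReal.ofReal qlow ≤
        ENNReal.ofReal (max CA CB * |(r : ℝ)| ^ γ) * D := by
      rw [div_eq_mul_inv, ← ENNReal.ofReal_inv_of_pos hqlowpos, mul_right_comm,
        ← ENNReal.ofReal_mul hERpos.le]
      apply mul_le_mul_left
      apply ENNReal.ofReal_le_ofReal
      have hqinv : qlow⁻¹ = (8 / cγ) * |(r : ℝ)| ^ γ := by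
        rw [hqlow, mul_inv, Real.rpow_neg habs0.le, inv_inv, inv_div]
      calc ER * qlow⁻¹ = (8 * ER / cγ) * |(r : ℝ)| ^ γ := by rw [hqinv]; ring
        _ ≤ max CA CB * |(r : ℝ)| ^ γ := by
            apply mul_le_mul_of_nonneg_right _ hrpowpos.le
            rw [← hCB]
            exact le_max_right _ _
    calc L ≤ ((((2 * m + 3 : ℕ) : ENNReal) *
          (((2 * m + 2 : ℕ) : ENNReal) * 4 + κ * 4)) * D) / ENNReal.ofReal qlow := hdiv2
      _ = ((ENNReal.ofReal ER) * D) / ENNReal.ofReal qlow := by rw [hEeq]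
      _ ≤ ENNReal.ofReal (max CA CB * |(r : ℝ)| ^ γ) * D := hfinal
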